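/- Let A be a finite-dimensional K-algebra (not assumed associative a priori) equipped with a nondegenerate bilinear form (·,·) satisfying (xy, z) = (x, yz) for all x,y,z ∈ A (define the trilinear form (x,y,z) := (xy, z)). Fix a basis (b_i) of A and let F^{ij} be the inverse matrix of F_{ij} = (b_i, b_j). Then multiplication in A is associative if and only if for all x₁, x₂, x₃, x₄ ∈ A: Σ_{i,j} (x₁, x₂, b_i) F^{ij} (b_j, x₃, x₄) = Σ_{i,j} (x₄, x₁, b_i) F^{ij} (b_j, x₂, x₃). -/

import Mathlib

/-- For a finite-dimensional algebra (multiplication a bilinear map,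
not assumed associative) with a nondegenerate symmetric invariant bilinear form,
a basis `b` and the inverse Gram matrix `Finv`, associativity of the
multiplication is equivalent to the "crossing symmetry"
`∑ᵢⱼ (x₁,x₂,bᵢ) F^{ij} (bⱼ,x₃,x₄) = ∑ᵢⱼ (x₄,x₁,bᵢ) F^{ij} (bⱼ,x₂,x₃)`,
where `(x,y,z) := B (xy) z`. -/
theorem stmt1 {K A : Type*} [Field K] [AddCommGroup A] [Module K A]
    [FiniteDimensional K A]
    (mul : A →ₗ[K] A →ₗ[K] A)
    (B : A →ₗ[K] A →ₗ[K] K)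
    (hsymm : ∀ x y, B x y = B y x)
    (hnondeg : ∀ x, (∀ y, B x y = 0) → x = 0)
    (hinv : ∀ x y z, B (mul x y) z = B x (mul y z))
    {ι : Type*} [Fintype ι] [DecidableEq ι]
    (b : Module.Basis ι K A)
    (Finv : Matrix ι ι K)
    (hFinv : Finv * (Matrix.of fun i j => B (b i) (b j)) = 1)
    (hFinv' : (Matrix.of fun i j => B (b i) (b j)) * Finv = 1) :
    (∀ x y z : A, mul (mul x y) z = mul x (mul y z)) ↔
      (∀ x₁ x₂ x₃ x₄ : A,
        ∑ i, ∑ j, B (mul x₁ x₂) (b i) * Finv i j * B (mul (b j) x₃) x₄ =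
        ∑ i, ∑ j, B (mul x₄ x₁) (b i) * Finv i j * B (mul (b j) x₂) x₃) := by
  have hrep : ∀ (v : A) (i : ι), ∑ j, Finv i j * B (b j) v = b.repr v i := by
    intro v i
    have hv : (∑ k, b.repr v k • b k) = v := b.sum_repr v
    have h1 : ∀ j, B (b j) v = ∑ k, b.repr v k * B (b j) (b k) := by
      intro j
      conv_lhs => rw [← hv]
      simp only [map_sum, map_smul, smul_eq_mul]
    calc ∑ j, Finv i j * B (b j) v
        = ∑ j, ∑ k, Finv i j * (B (b j) (b k) * b.repr v k) := by
          simp only [h1, Finset.mul_sum]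
          congr 1; ext j; congr 1; ext k; ring
      _ = ∑ k, (∑ j, Finv i j * B (b j) (b k)) * b.repr v k := by
          rw [Finset.sum_comm]
          simp [Finset.sum_mul, mul_assoc]
      _ = ∑ k, (1 : Matrix ι ι K) i k * b.repr v k := by
          congr 1; ext k
          rw [← hFinv, Matrix.mul_apply]
          rfl
      _ = b.repr v i := by simp [Matrix.one_apply]
  have key : ∀ u v : A, ∑ i, ∑ j, B u (b i) * Finv i j * B (b j) v = B u v := by
    intro u v
    calc ∑ i, ∑ j, B u (b i) * Finv i j * B (b j) v
        = ∑ i, B u (b i) * ∑ j, Finv i j * B (b j) v := by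
          congr 1; ext i
          rw [Finset.mul_sum]; congr 1; ext j; ring
      _ = ∑ i, B u (b i) * b.repr v i := by simp [hrep]
      _ = B u v := by
          conv_rhs => rw [← b.sum_repr v]
          simp only [map_sum, map_smul, smul_eq_mul, mul_comm]
  constructor
  · intro hassoc x₁ x₂ x₃ x₄
    have l : ∀ (u x y : A), ∑ i, ∑ j, B u (b i) * Finv i j * B (mul (b j) x) y
        = B u (mul x y) := by
      intro u x y
      rw [← key u (mul x y)]
      congr 1; ext i; congr 1; ext j
      rw [hinv]
    rw [l, l]
    calc B (mul x₁ x₂) (mul x₃ x₄)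
        = B (mul (mul x₁ x₂) x₃) x₄ := (hinv _ _ _).symm
      _ = B (mul x₁ (mul x₂ x₃)) x₄ := by rw [hassoc]
      _ = B x₄ (mul x₁ (mul x₂ x₃)) := hsymm _ _
      _ = B (mul x₄ x₁) (mul x₂ x₃) := (hinv _ _ _).symm
  · intro hcr x y z
    have l : ∀ (u x y : A), ∑ i, ∑ j, B u (b i) * Finv i j * B (mul (b j) x) y
        = B u (mul x y) := by
      intro u x y
      rw [← key u (mul x y)]
      congr 1; ext i; congr 1; ext j
      rw [hinv]
    have h : ∀ w : A, B (mul (mul x y) z - mul x (mul y z)) w = 0 := by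
      intro w
      have := hcr x y z w
      rw [l, l] at this
      -- this : B (mul x y) (mul z w) = B (mul w x) (mul y z)
      have e1 : B (mul (mul x y) z) w = B (mul x y) (mul z w) := hinv _ _ _
      have e2 : B (mul x (mul y z)) w = B (mul w x) (mul y z) := by
        rw [hsymm, ← hinv, hsymm]
      simp [map_sub, e1, e2, this]
    have := hnondeg _ h
    exact sub_eq_zero.mp this
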